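/- Let G be a finite monoid, σ an endomorphism of G, and g, h ∈ G. The set of natural numbers t with h = ρ_{(g,1)^t}(1_G) is either empty, a singleton, or of the form {x₀ + a·x : x ∈ ℕ} for some natural numbers x₀ and a with a > 0. -/
import Mathlib


/-- Multiplication in the semidirect product `G ⋊_σ ℕ`:
`(g,s)(g',s') = (g·σ^s(g'), s+s')`. -/
def sdMul {G : Type*} [Monoid G] (σ : Monoid.End G) (x y : G × ℕ) : G × ℕ :=
  (x.1 * (σ ^ x.2) y.1, x.2 + y.2)

/-- The `t`-th power in the semidirect product `G ⋊_σ ℕ`. -/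
def sdPow {G : Type*} [Monoid G] (σ : Monoid.End G) (x : G × ℕ) : ℕ → G × ℕ
  | 0 => (1, 0)
  | t + 1 => sdMul σ x (sdPow σ x t)

/-- The transformation `ρ_{(g,s)} : G → G`, `x ↦ g·σ^s(x)`. -/
def rho {G : Type*} [Monoid G] (σ : Monoid.End G) (x : G × ℕ) : G → G :=
  fun z => x.1 * (σ ^ x.2) z

/-- for a finite monoid, the solution set of the SDLP is empty,
a singleton, or an arithmetic progression `{x₀ + a·x : x ∈ ℕ}` with `a > 0`. -/
theorem sdlp_solution_set {G : Type*} [Monoid G] [Finite G] (σ : Monoid.End G) (g h : G) :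
    {t : ℕ | h = rho σ (sdPow σ (g, 1) t) 1} = ∅ ∨
      (∃ t₀ : ℕ, {t : ℕ | h = rho σ (sdPow σ (g, 1) t) 1} = {t₀}) ∨
      (∃ x₀ a : ℕ, 0 < a ∧
        {t : ℕ | h = rho σ (sdPow σ (g, 1) t) 1} = {n : ℕ | ∃ x : ℕ, n = x₀ + a * x}) := by
  classical
  set F : G → G := fun x => g * σ x with hF
  have hpow : ∀ t, sdPow σ (g, 1) t = (F^[t] 1, t) := by
    intro t
    induction t with
    | zero => rfl
    | succ n ih =>
        simp only [sdPow, sdMul, ih, Function.iterate_succ_apply', hF, pow_one]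
        exact Prod.ext rfl (Nat.add_comm 1 n)
  have hf : ∀ t, rho σ (sdPow σ (g, 1) t) 1 = F^[t] 1 := by
    intro t
    rw [hpow]
    simp [rho]
  have hSmem : ∀ t, (t ∈ {t : ℕ | h = rho σ (sdPow σ (g, 1) t) 1}) ↔ h = F^[t] 1 := by
    intro t; simp [hf]
  have key : ∀ a b : ℕ, h = F^[a] 1 → h = F^[b] 1 → ∀ k, F^[a + k] 1 = F^[b + k] 1 := by
    intro a b ha hb k
    rw [Nat.add_comm a k, Nat.add_comm b k, Function.iterate_add_apply,
      Function.iterate_add_apply, ← ha, ← hb]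
  by_cases hne : ∃ t, h = F^[t] 1
  · have ht₀ : h = F^[Nat.find hne] 1 := Nat.find_spec hne
    set t₀ := Nat.find hne with ht₀def
    by_cases hb : ∃ b, (h = F^[b] 1 ∧ b ≠ t₀)
    · right; right
      have hbspec := Nat.find_spec hb
      set b := Nat.find hb with hbdef
      have hlt : t₀ < b := lt_of_le_of_ne (Nat.find_le hbspec.1) (Ne.symm hbspec.2)
      set d := b - t₀ with hd
      have hdpos : 0 < d := Nat.sub_pos_of_lt hlt
      have htb : t₀ + d = b := Nat.add_sub_cancel' (le_of_lt hlt)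
      have period : ∀ k, F^[t₀ + k + d] 1 = F^[t₀ + k] 1 := by
        intro k
        have : t₀ + k + d = b + k := by omega
        rw [this]
        exact (key t₀ b ht₀ hbspec.1 k).symm
      have periodMul : ∀ q k, F^[t₀ + k + d * q] 1 = F^[t₀ + k] 1 := by
        intro q
        induction q with
        | zero => intro k; simp
        | succ n ih =>
            intro k
            have : t₀ + k + d * (n + 1) = t₀ + (k + d * n) + d := by ring
            rw [this, period (k + d * n), ← Nat.add_assoc]
            exact ih k
      refine ⟨t₀, d, hdpos, ?_⟩
      ext t
      simp only [hSmem, Set.mem_setOf_eq]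
      constructor
      · intro htS
        have hle : t₀ ≤ t := Nat.find_le htS
        set k := t - t₀ with hk
        have htk : t = t₀ + k := by omega
        set r := k % d with hr
        set q := k / d with hq
        have hkr : k = r + d * q := by rw [hr, hq]; exact (Nat.mod_add_div k d).symm
        have : h = F^[t₀ + r] 1 := by
          rw [htk, hkr, ← Nat.add_assoc, periodMul q r] at htS
          exact htS
        by_cases hr0 : r = 0
        · refine ⟨q, ?_⟩
          rw [htk, hkr, hr0]
          omega
        · exfalso
          have hne' : t₀ + r ≠ t₀ := by omega
          have := Nat.find_min' hb ⟨this, hne'⟩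
          have hrd : r < d := Nat.mod_lt _ hdpos
          omega
      · rintro ⟨x, rfl⟩
        have := periodMul x 0
        simpa using this.symm ▸ (by simpa using (periodMul x 0).symm ▸ ht₀)
    · right; left
      refine ⟨t₀, ?_⟩
      ext t
      simp only [hSmem, Set.mem_singleton_iff]
      constructor
      · intro htS
        by_contra hne'
        exact hb ⟨t, htS, hne'⟩
      · rintro rfl; exact ht₀
  · left
    ext t
    simp only [hSmem, Set.mem_empty_iff_false, iff_false]
    exact fun htS => hne ⟨t, htS⟩
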